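/- For every partition λ, the identity ∑_{ν ∈ U(λ)} q^{n(ν)} / H_ν(q) = (1/(1−q)) · q^{n(λ)} / H_λ(q) holds in the field ℚ(q) of rational functions in one variable q over ℚ. -/

import Mathlib

open Finset

noncomputable section

/-- The field `ℚ(q,t)` of rational functions in two variables over `ℚ`. -/
abbrev K : Type := FractionRing (MvPolynomial (Fin 2) ℚ)

def q : K := algebraMap (MvPolynomial (Fin 2) ℚ) K (MvPolynomial.X 0)
def t : K := algebraMap (MvPolynomial (Fin 2) ℚ) K (MvPolynomial.X 1)

/-- Arm-length of the cell `c = (row, col)` of `κ` (cells are 0-indexed, Mathlib convention). -/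
def arm (κ : YoungDiagram) (c : ℕ × ℕ) : ℕ := κ.rowLen c.1 - c.2 - 1

/-- Leg-length of the cell `c = (row, col)` of `κ`. -/
def leg (κ : YoungDiagram) (c : ℕ × ℕ) : ℕ := κ.colLen c.2 - c.1 - 1

/-- Hook-length of the cell `c` of `κ`. -/
def hook (κ : YoungDiagram) (c : ℕ × ℕ) : ℕ := arm κ c + leg κ c + 1

/-- `Covers μ λ` means `μ ⋖ λ` in Young's lattice. -/
def Covers (μ l : YoungDiagram) : Prop :=
  μ.cells ⊆ l.cells ∧ l.cells.card = μ.cells.card + 1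

open scoped Classical in
/-- For `μ ⋖ λ`, the set `R_{λ/μ}` of cells of `μ` in the same row as the unique cell of `λ/μ`. -/
def Rset (μ l : YoungDiagram) : Finset (ℕ × ℕ) :=
  μ.cells.filter fun c => ∃ d ∈ l.cells \ μ.cells, c.1 = d.1

open scoped Classical in
/-- For `μ ⋖ λ`, the set `C_{λ/μ}` of cells of `μ` in the same column as the unique cell of `λ/μ`. -/
def Cset (μ l : YoungDiagram) : Finset (ℕ × ℕ) :=
  μ.cells.filter fun c => ∃ d ∈ l.cells \ μ.cells, c.2 = d.2

/-- `[i,j] = 1 - q^i t^j`. -/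
def brk (i j : ℕ) : K := 1 - q ^ i * t ^ j

/-- `b_κ(c) = (1 - q^{a} t^{ℓ+1})/(1 - q^{a+1} t^{ℓ})`. -/
def bcell (κ : YoungDiagram) (c : ℕ × ℕ) : K :=
  brk (arm κ c) (leg κ c + 1) / brk (arm κ c + 1) (leg κ c)

/-- `ψ_{λ/μ}(q,t)` for `μ ⋖ λ`. -/
def ψqt (μ l : YoungDiagram) : K := ∏ c ∈ Rset μ l, bcell μ c / bcell l c

/-- `φ_{λ/μ}(q,t)` for `μ ⋖ λ`. -/
def φqt (μ l : YoungDiagram) : K :=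
  ((1 - t) / (1 - q)) * ∏ c ∈ Cset μ l, bcell l c / bcell μ c

/-- `α_{ν/λ}(q,t)` for `λ ⋖ ν`. -/
def alph (l ν : YoungDiagram) : K :=
  (∏ c ∈ Rset l ν, brk (arm l c) (leg l c + 1) / brk (arm ν c) (leg ν c + 1)) *
  (∏ c ∈ Cset l ν, brk (arm l c + 1) (leg l c) / brk (arm ν c + 1) (leg ν c))

/-- `ᾱ_{ν/λ}(q,t)` for `λ ⋖ ν`. -/
def alphBar (l ν : YoungDiagram) : K :=
  (∏ c ∈ Rset l ν, brk (arm l c + 1) (leg l c) / brk (arm ν c + 1) (leg ν c)) *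
  (∏ c ∈ Cset l ν, brk (arm l c) (leg l c + 1) / brk (arm ν c) (leg ν c + 1))

/-- `n(κ) = ∑_{c ∈ κ} ℓ_κ(c)` (as an integer). -/
def nstat (κ : YoungDiagram) : ℤ := ∑ c ∈ κ.cells, (leg κ c : ℤ)

/-- `n'(κ) = ∑_{c ∈ κ} a_κ(c)` (as an integer). -/
def nstat' (κ : YoungDiagram) : ℤ := ∑ c ∈ κ.cells, (arm κ c : ℤ)


/-- The `q`-hook product `H_κ(q) = ∏_{c∈κ} (1 − q^{h_κ(c)})` in `ℚ(q) = RatFunc ℚ`. -/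
def Hq (κ : YoungDiagram) : RatFunc ℚ := ∏ c ∈ κ.cells, (1 - RatFunc.X ^ hook κ c)

section LagrangeAux
open Polynomial
variable {F : Type*} [Field F] {ι : Type*} [DecidableEq ι]

lemma basis_eq_C_mul_nodal (s : Finset ι) (v : ι → F) (i : ι) :
    Lagrange.basis s v i
      = C (Lagrange.nodalWeight s v i) * Lagrange.nodal (s.erase i) v := by
  unfold Lagrange.basis Lagrange.nodalWeight Lagrange.nodal Lagrange.basisDivisor
  rw [Finset.prod_mul_distrib, map_prod]

lemma lagrange_sum_zero (s : Finset ι) (v : ι → F) (hvs : Set.InjOn v s) (P : F[X])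
    (hP : P.degree < ((#s - 1 : ℕ) : WithBot ℕ)) :
    ∑ i ∈ s, P.eval (v i) * Lagrange.nodalWeight s v i = 0 := by
  have h1 : P.degree < (#s : WithBot ℕ) := by
    refine lt_of_lt_of_le hP (Nat.cast_le.mpr (Nat.sub_le _ _))
  have hI : P = Lagrange.interpolate s v (fun i => P.eval (v i)) :=
    Lagrange.eq_interpolate hvs h1
  have hc := congrArg (fun p : F[X] => p.coeff (#s - 1)) hI
  simp only [Lagrange.interpolate_apply, Polynomial.finset_sum_coeff] at hc
  rw [Polynomial.coeff_eq_zero_of_degree_lt hP] at hc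
  calc ∑ i ∈ s, P.eval (v i) * Lagrange.nodalWeight s v i
      = ∑ i ∈ s, (C (P.eval (v i)) * Lagrange.basis s v i).coeff (#s - 1) := by
        apply Finset.sum_congr rfl
        intro i hi
        rw [basis_eq_C_mul_nodal, ← mul_assoc, ← Polynomial.C_mul, Polynomial.coeff_C_mul]
        have hmon : (Lagrange.nodal (s.erase i) v).Monic := Lagrange.nodal_monic
        have hdeg : (Lagrange.nodal (s.erase i) v).natDegree = #s - 1 := by
          rw [Lagrange.natDegree_nodal, Finset.card_erase_of_mem hi]
        rw [← hdeg, hmon.coeff_natDegree, mul_one]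
    _ = 0 := hc.symm

lemma key_identity (M : ℕ) (x : ℕ → F) (q : F)
    (hinj : ∀ i, i ≤ M → ∀ j, j ≤ M → x i = x j → i = j)
    (hx0 : ∀ i, i ≤ M → x i ≠ 0)
    (hq0 : q ≠ 0) (hq1 : 1 - q ≠ 0)
    (hqx : ∀ i, i ≤ M → 1 - q * x i ≠ 0)
    (hlast : x M = 1) :
    ∑ r ∈ range (M+1), (1 - q * x r)⁻¹ *
      ∏ j ∈ (range (M+1)).erase r, (x j - q * x r) / (x j - x r) = (1 - q)⁻¹ := by
  classical
  set S := ∑ r ∈ range (M+1), (1 - q * x r)⁻¹ *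
      ∏ j ∈ (range (M+1)).erase r, (x j - q * x r) / (x j - x r) with hS
  set v : ℕ → F := fun n => if n = 0 then 0 else if n = 1 then q⁻¹ else x (n - 2) with hv
  set tt : Finset ℕ := (range (M+1)).image (· + 2) with htt
  set s : Finset ℕ := insert 0 (insert 1 tt) with hs
  have hv0 : v 0 = 0 := rfl
  have hv1 : v 1 = q⁻¹ := rfl
  have hv2 : ∀ k, v (k + 2) = x k := by intro k; simp [hv]
  have h1t : (1 : ℕ) ∉ tt := by simp [htt]
  have h0t : (0 : ℕ) ∉ insert 1 tt := by simp [htt]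
  have hmemtt : ∀ k, k ≤ M → k + 2 ∈ tt := by
    intro k hk; simp only [htt, mem_image, mem_range]; exact ⟨k, by omega, rfl⟩
  have hcard : #s = M + 3 := by
    rw [hs, card_insert_of_notMem h0t, card_insert_of_notMem h1t, htt,
      card_image_of_injective _ (add_left_injective 2), card_range]
  -- membership characterization
  have hmem : ∀ n ∈ s, n = 0 ∨ n = 1 ∨ ∃ k, k ≤ M ∧ n = k + 2 := by
    intro n hn
    simp only [hs, htt, mem_insert, mem_image, mem_range] at hn
    rcases hn with h | h | ⟨k, hk, rfl⟩
    · exact Or.inl h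
    · exact Or.inr (Or.inl h)
    · exact Or.inr (Or.inr ⟨k, by omega, rfl⟩)
  have hxq : ∀ k, k ≤ M → x k ≠ q⁻¹ := by
    intro k hk h
    apply hqx k hk
    rw [h, mul_inv_cancel₀ hq0, sub_self]
  have hvinj : Set.InjOn v s := by
    intro a ha b hb hab
    rcases hmem a ha with rfl | rfl | ⟨k, hk, rfl⟩ <;>
      rcases hmem b hb with rfl | rfl | ⟨k', hk', rfl⟩
    · rfl
    · rw [hv0, hv1] at hab; exact absurd hab.symm (inv_ne_zero hq0)
    · rw [hv0, hv2] at hab; exact absurd hab.symm (hx0 k' hk')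
    · rw [hv0, hv1] at hab; exact absurd hab (inv_ne_zero hq0)
    · rfl
    · rw [hv1, hv2] at hab; exact absurd hab.symm (hxq k' hk')
    · rw [hv0, hv2] at hab; exact absurd hab (hx0 k hk)
    · rw [hv1, hv2] at hab; exact absurd hab (hxq k hk)
    · rw [hv2, hv2] at hab; rw [hinj k hk k' hk' hab]
  set P : F[X] := ∏ j ∈ range (M+1), (C (x j) - C q * X) with hP
  have hdegP : P.degree < ((#s - 1 : ℕ) : WithBot ℕ) := by
    have h1 : P.degree ≤ (M + 1 : ℕ) := by
      refine le_trans (Polynomial.degree_prod_le _ _) ?_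
      refine le_trans (Finset.sum_le_sum (g := fun _ => (1 : WithBot ℕ))
        (fun j _ => ?_)) ?_
      · refine le_trans (degree_sub_le _ _) (max_le (le_trans degree_C_le (by norm_num)) ?_)
        refine le_trans (degree_mul_le _ _) ?_
        rw [degree_X]
        refine le_trans (add_le_add degree_C_le le_rfl) (by norm_num)
      · rw [Finset.sum_const, card_range, nsmul_eq_mul, mul_one]
    refine lt_of_le_of_lt h1 ?_
    rw [hcard]
    exact_mod_cast (by omega : M + 1 < M + 3 - 1)
  have H := lagrange_sum_zero s v hvinj P hdegP
  rw [hs, Finset.sum_insert h0t, Finset.sum_insert h1t, htt,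
    Finset.sum_image (fun a _ b _ h => by omega)] at H
  have evalP : ∀ y : F, P.eval y = ∏ j ∈ range (M+1), (x j - q * y) := by
    intro y
    rw [hP, eval_prod]
    exact Finset.prod_congr rfl (fun j _ => by simp)
  have e1 : P.eval (v 1) = 0 := by
    rw [hv1, evalP]
    apply Finset.prod_eq_zero (self_mem_range_succ M)
    rw [hlast, mul_inv_cancel₀ hq0, sub_self]
  have W0 : Lagrange.nodalWeight s v 0
      = (0 - q⁻¹)⁻¹ * ∏ k ∈ range (M+1), (0 - x k)⁻¹ := by
    rw [Lagrange.nodalWeight, hs, Finset.erase_insert h0t, Finset.prod_insert h1t, htt,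
      Finset.prod_image (fun a _ b _ h => by omega)]
    simp only [hv0, hv1, hv2]
  have t0 : P.eval (v 0) * Lagrange.nodalWeight s v 0 = (-1)^M * q := by
    rw [hv0, evalP, W0]
    have h1 : ∏ j ∈ range (M+1), (x j - q * 0) = ∏ j ∈ range (M+1), x j := by
      exact Finset.prod_congr rfl (fun j _ => by ring_nf)
    rw [h1]
    have hAC : (∏ j ∈ range (M+1), x j) * (∏ k ∈ range (M+1), (0 - x k)⁻¹)
        = (-1 : F)^(M+1) := by
      rw [← Finset.prod_mul_distrib]
      have : ∀ j ∈ range (M+1), x j * (0 - x j)⁻¹ = (-1 : F) := by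
        intro j hj
        have hj' : x j ≠ 0 := hx0 j (by rw [mem_range] at hj; omega)
        rw [zero_sub, inv_neg, mul_neg, mul_inv_cancel₀ hj']
      rw [Finset.prod_congr rfl this, Finset.prod_const, card_range]
    calc (∏ j ∈ range (M+1), x j) * ((0 - q⁻¹)⁻¹ * ∏ k ∈ range (M+1), (0 - x k)⁻¹)
        = (0 - q⁻¹)⁻¹ * ((∏ j ∈ range (M+1), x j) * ∏ k ∈ range (M+1), (0 - x k)⁻¹) := by
          ring
      _ = (0 - q⁻¹)⁻¹ * (-1 : F)^(M+1) := by rw [hAC]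
      _ = (-1)^M * q := by
          rw [zero_sub, inv_neg, inv_inv, pow_succ]
          ring
  have tk : ∀ k ∈ range (M+1), P.eval (v (k+2)) * Lagrange.nodalWeight s v (k+2)
      = (-1)^(M+1) * q * ((1 - q) * ((1 - q * x k)⁻¹ *
          ∏ j ∈ (range (M+1)).erase k, (x j - q * x k) / (x j - x k))) := by
    intro k hk
    have hkM : k ≤ M := by rw [mem_range] at hk; omega
    have hxk := hx0 k hkM
    have hqxk := hqx k hkM
    have htte : tt.erase (k+2) = ((range (M+1)).erase k).image (· + 2) := by
      ext n
      simp only [htt, mem_erase, mem_image, mem_range]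
      constructor
      · rintro ⟨h1, a, ha, rfl⟩
        exact ⟨a, ⟨by omega, ha⟩, rfl⟩
      · rintro ⟨a, ⟨h1, h2⟩, rfl⟩
        exact ⟨by omega, a, h2, rfl⟩
    have hW : Lagrange.nodalWeight s v (k+2)
        = (x k - 0)⁻¹ * ((x k - q⁻¹)⁻¹ *
            ∏ j ∈ (range (M+1)).erase k, (x k - x j)⁻¹) := by
      rw [Lagrange.nodalWeight, hs,
        Finset.erase_insert_of_ne (by omega), Finset.erase_insert_of_ne (by omega), htte]
      rw [Finset.prod_insert (by simp), Finset.prod_insert (by simp),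
        Finset.prod_image (fun a _ b _ h => by omega)]
      simp only [hv0, hv1, hv2]
    rw [hv2, evalP, hW, ← Finset.mul_prod_erase _ _ hk]
    have h2 : ∏ j ∈ (range (M+1)).erase k, (x k - x j)⁻¹
        = (-1 : F)^M * ∏ j ∈ (range (M+1)).erase k, (x j - x k)⁻¹ := by
      have : ∀ j ∈ (range (M+1)).erase k, (x k - x j)⁻¹ = (-1 : F) * (x j - x k)⁻¹ := by
        intro j hj
        rw [← neg_sub, inv_neg, neg_one_mul]
      rw [Finset.prod_congr rfl this, Finset.prod_mul_distrib, Finset.prod_const,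
        card_erase_of_mem hk, card_range, Nat.add_sub_cancel]
    rw [h2]
    simp only [div_eq_mul_inv]
    rw [Finset.prod_mul_distrib]
    set A := ∏ j ∈ (range (M+1)).erase k, (x j - q * x k) with hA
    set B := ∏ j ∈ (range (M+1)).erase k, (x j - x k)⁻¹ with hB
    have hxq' : x k - q⁻¹ ≠ 0 := sub_ne_zero.mpr (hxq k hkM)
    have key : (x k - q * x k) * (x k - 0)⁻¹ * (x k - q⁻¹)⁻¹ * (-1:F)^M
        = (-1)^(M+1) * q * ((1 - q) * (1 - q * x k)⁻¹) := by
      have e2 : x k - q⁻¹ = -(1 - q * x k) * q⁻¹ := by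
        field_simp
        try ring
      have e3 : (x k - q * x k) * (x k - 0)⁻¹ * (x k - q⁻¹)⁻¹ * (-1:F)^M
          = (1 - q) * (x k * (x k)⁻¹) * (-(1 - q * x k) * q⁻¹)⁻¹ * (-1)^M := by
        rw [← e2]; ring
      rw [e3, mul_inv_cancel₀ hxk, mul_inv, inv_neg, inv_inv, pow_succ]
      ring
    linear_combination (A * B) * key
  have hsum : ∑ k ∈ range (M+1), P.eval (v (k+2)) * Lagrange.nodalWeight s v (k+2)
      = (-1)^(M+1) * q * ((1 - q) * S) := by
    rw [Finset.sum_congr rfl tk, ← Finset.mul_sum]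
    congr 1
    rw [← Finset.mul_sum]
  rw [e1, zero_mul, t0, hsum] at H
  have hc : ((-1:F)^M * q) * (1 - (1 - q) * S) = 0 := by
    rw [pow_succ] at H
    linear_combination H
  have hne : ((-1:F)^M * q) ≠ 0 := mul_ne_zero (pow_ne_zero _ (by norm_num)) hq0
  have h4 : (1 - q) * S = 1 := by
    rcases mul_eq_zero.mp hc with h | h
    · exact absurd h hne
    · have := sub_eq_zero.mp h
      exact this.symm
  exact eq_inv_of_mul_eq_one_left (by rw [mul_comm]; exact h4)

end LagrangeAux

section YoungAux
open Polynomial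
noncomputable section
abbrev FF : Type := RatFunc ℚ
abbrev XX : FF := RatFunc.X

lemma N1 : ∀ k : ℕ, 1 ≤ k → (1 : FF) - XX ^ k ≠ 0 := by
  intro k hk h
  have h1 : ((1 : ℚ[X]) - Polynomial.X ^ k) = 0 := by
    apply RatFunc.algebraMap_injective ℚ
    rw [map_sub, map_pow, RatFunc.algebraMap_X, map_one, map_zero]
    exact h
  have h2 := congrArg (fun p : ℚ[X] => p.coeff 0) h1
  simp only [Polynomial.coeff_sub, Polynomial.coeff_one_zero, Polynomial.coeff_X_pow,
    Polynomial.coeff_zero] at h2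
  rw [if_neg (by omega : ¬ (0 = k))] at h2
  norm_num at h2

lemma N2 : ∀ a b : ℕ, a ≠ b → (XX ^ a - XX ^ b : FF) ≠ 0 := by
  have base : ∀ a b : ℕ, a < b → (XX ^ a - XX ^ b : FF) ≠ 0 := by
    intro a b hab
    have h1 : (XX ^ a - XX ^ b : FF) = XX ^ a * (1 - XX ^ (b - a)) := by
      rw [mul_sub, mul_one, ← pow_add]
      congr 2
      omega
    rw [h1]
    exact mul_ne_zero (pow_ne_zero _ RatFunc.X_ne_zero) (N1 _ (by omega))
  intro a b hab
  rcases lt_or_gt_of_ne hab with h | h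
  · exact base a b h
  · intro hc
    exact base b a h (by linear_combination -hc)

lemma hook_pos (κ : YoungDiagram) (c : ℕ × ℕ) : 1 ≤ hook κ c := by
  rw [hook]; omega

lemma Hq_ne_zero (κ : YoungDiagram) : Hq κ ≠ 0 := by
  rw [Hq]
  apply Finset.prod_ne_zero_iff.mpr
  intro c _
  exact N1 _ (hook_pos κ c)

/-- cells of a diagram as a double product over rows -/
lemma prod_cells {β : Type*} [CommMonoid β] (κ : YoungDiagram) (M : ℕ)
    (hM : κ.colLen 0 ≤ M) (f : ℕ × ℕ → β) :
    ∏ c ∈ κ.cells, f c = ∏ r ∈ range (M+1), ∏ j ∈ range (κ.rowLen r), f (r, j) := by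
  have hsig : ∏ σ ∈ (range (M+1)).sigma (fun r => range (κ.rowLen r)), f (σ.1, σ.2)
      = ∏ r ∈ range (M+1), ∏ j ∈ range (κ.rowLen r), f (r, j) :=
    Finset.prod_sigma _ _ _
  rw [← hsig]
  apply Finset.prod_nbij' (fun c => (⟨c.1, c.2⟩ : (_ : ℕ) × ℕ)) (fun σ => (σ.1, σ.2))
  · intro c hc
    rw [YoungDiagram.mem_cells] at hc
    rw [Finset.mem_sigma, mem_range, mem_range]
    dsimp only
    constructor
    · have h0 : (c.1, 0) ∈ κ := κ.up_left_mem le_rfl (Nat.zero_le _) (by rwa [Prod.mk.eta])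
      rw [YoungDiagram.mem_iff_lt_colLen] at h0
      omega
    · rw [← YoungDiagram.mem_iff_lt_rowLen]
      rwa [Prod.mk.eta]
  · intro σ hσ
    rw [Finset.mem_sigma, mem_range, mem_range] at hσ
    rw [YoungDiagram.mem_cells, YoungDiagram.mem_iff_lt_rowLen]
    exact hσ.2
  · intro c _; rfl
  · intro σ _; rfl
  · intro c _; rfl

/-- the `β_i = λ_i + M - i` sequence -/
def LL (κ : YoungDiagram) (M i : ℕ) : ℕ := κ.rowLen i + (M - i)

lemma LL_strict_anti (κ : YoungDiagram) (M : ℕ) {i j : ℕ} (hij : i < j) (hj : j ≤ M) :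
    LL κ M j < LL κ M i := by
  have := κ.rowLen_anti i j (le_of_lt hij)
  rw [LL, LL]
  omega

lemma rowLen_eq_zero_iff {κ : YoungDiagram} {i : ℕ} :
    κ.rowLen i = 0 ↔ κ.colLen 0 ≤ i := by
  have h1 : (i, 0) ∈ κ ↔ 0 < κ.rowLen i := YoungDiagram.mem_iff_lt_rowLen
  have h2 : (i, 0) ∈ κ ↔ i < κ.colLen 0 := YoungDiagram.mem_iff_lt_colLen
  by_cases hmem : (i, 0) ∈ κ
  · have a1 := h1.mp hmem
    have a2 := h2.mp hmem
    omega
  · have a1 : ¬ 0 < κ.rowLen i := fun hh => hmem (h1.mpr hh)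
    have a2 : ¬ i < κ.colLen 0 := fun hh => hmem (h2.mpr hh)
    omega

end

noncomputable section
lemma row_decomp (κ : YoungDiagram) (M : ℕ) (hM : κ.colLen 0 ≤ M) {r : ℕ} (hr : r ≤ M)
    (f : ℕ → FF) :
    ∏ k ∈ Icc 1 (LL κ M r), f k
      = (∏ j ∈ range (κ.rowLen r), f (hook κ (r, j))) *
        ∏ i ∈ Ioc r M, f (LL κ M r - LL κ M i) := by
  classical
  have hcell : ∀ j, j < κ.rowLen r → r < κ.colLen j ∧ κ.colLen j ≤ M := by
    intro j hj
    have h1 : (r, j) ∈ κ := YoungDiagram.mem_iff_lt_rowLen.mpr hj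
    have h2 : r < κ.colLen j := YoungDiagram.mem_iff_lt_colLen.mp h1
    exact ⟨h2, le_trans (κ.colLen_anti 0 j (Nat.zero_le _)) hM⟩
  have inj1 : Set.InjOn (fun j => hook κ (r, j)) (range (κ.rowLen r)) := by
    intro a ha b hb hab
    rw [Finset.coe_range, Set.mem_Iio] at ha hb
    obtain ⟨ha1, _⟩ := hcell a ha
    obtain ⟨hb1, _⟩ := hcell b hb
    simp only [hook, arm, leg] at hab
    rcases le_total a b with h | h
    · have := κ.colLen_anti a b h
      omega
    · have := κ.colLen_anti b a h
      omega
  have inj2 : Set.InjOn (fun i => LL κ M r - LL κ M i) (Ioc r M) := by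
    intro a ha b hb hab
    rw [Finset.coe_Ioc, Set.mem_Ioc] at ha hb
    have hra : LL κ M a < LL κ M r := LL_strict_anti κ M ha.1 ha.2
    have hrb : LL κ M b < LL κ M r := LL_strict_anti κ M hb.1 hb.2
    simp only at hab
    rcases lt_trichotomy a b with h | h | h
    · have := LL_strict_anti κ M h hb.2
      omega
    · exact h
    · have := LL_strict_anti κ M h ha.2
      omega
  have hsub1 : (range (κ.rowLen r)).image (fun j => hook κ (r, j)) ⊆ Icc 1 (LL κ M r) := by
    intro k hk
    rw [mem_image] at hk
    obtain ⟨j, hj, rfl⟩ := hk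
    rw [mem_range] at hj
    obtain ⟨h1, h2⟩ := hcell j hj
    simp only [hook, arm, leg, LL]
    rw [mem_Icc]
    omega
  have hsub2 : (Ioc r M).image (fun i => LL κ M r - LL κ M i) ⊆ Icc 1 (LL κ M r) := by
    intro k hk
    rw [mem_image] at hk
    obtain ⟨i, hi, rfl⟩ := hk
    rw [mem_Ioc] at hi
    have := LL_strict_anti κ M hi.1 hi.2
    rw [mem_Icc]
    omega
  have hdisj : Disjoint ((range (κ.rowLen r)).image (fun j => hook κ (r, j)))
      ((Ioc r M).image (fun i => LL κ M r - LL κ M i)) := by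
    rw [Finset.disjoint_left]
    intro k hk1 hk2
    rw [mem_image] at hk1 hk2
    obtain ⟨j, hj, hjk⟩ := hk1
    obtain ⟨i, hi, hik⟩ := hk2
    rw [mem_range] at hj
    rw [mem_Ioc] at hi
    obtain ⟨h1, h2⟩ := hcell j hj
    have heq : hook κ (r, j) = LL κ M r - LL κ M i := by rw [hjk, hik]
    have hanti := κ.rowLen_anti r i (le_of_lt hi.1)
    simp only [hook, arm, leg, LL] at heq
    by_cases hmem : (i, j) ∈ κ
    · have a1 : j < κ.rowLen i := YoungDiagram.mem_iff_lt_rowLen.mp hmem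
      have a2 : i < κ.colLen j := YoungDiagram.mem_iff_lt_colLen.mp hmem
      omega
    · have a1 : ¬ j < κ.rowLen i := fun hh => hmem (YoungDiagram.mem_iff_lt_rowLen.mpr hh)
      have a2 : ¬ i < κ.colLen j := fun hh => hmem (YoungDiagram.mem_iff_lt_colLen.mpr hh)
      omega
  have hunion : (range (κ.rowLen r)).image (fun j => hook κ (r, j))
      ∪ (Ioc r M).image (fun i => LL κ M r - LL κ M i) = Icc 1 (LL κ M r) := by
    apply Finset.eq_of_subset_of_card_le (Finset.union_subset hsub1 hsub2)
    rw [Nat.card_Icc, Finset.card_union_of_disjoint hdisj,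
      Finset.card_image_of_injOn inj1, Finset.card_image_of_injOn inj2,
      card_range, Nat.card_Ioc, LL]
    omega
  rw [← hunion, Finset.prod_union hdisj, Finset.prod_image inj1, Finset.prod_image inj2]

lemma claimA (κ : YoungDiagram) (M : ℕ) (hM : κ.colLen 0 ≤ M) :
    Hq κ * (∏ r ∈ range (M+1), ∏ i ∈ Ioc r M, (1 - XX ^ (LL κ M r - LL κ M i)))
      = ∏ r ∈ range (M+1), ∏ k ∈ Icc 1 (LL κ M r), ((1:FF) - XX ^ k) := by
  rw [Hq, prod_cells κ M hM, ← Finset.prod_mul_distrib]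
  apply Finset.prod_congr rfl
  intro r hr
  rw [mem_range] at hr
  rw [row_decomp κ M hM (by omega : r ≤ M) (fun k => 1 - XX ^ k)]
end

noncomputable section

def AddableRow (κ : YoungDiagram) (r : ℕ) : Prop := ∀ i, i < r → κ.rowLen r < κ.rowLen i

lemma addable_lowerSet {κ : YoungDiagram} {r : ℕ} (h : AddableRow κ r) :
    IsLowerSet (↑(insert (r, κ.rowLen r) κ.cells) : Set (ℕ × ℕ)) := by
  intro a b hba ha
  simp only [Finset.coe_insert, Set.mem_insert_iff, Finset.mem_coe] at ha ⊢
  rcases ha with rfl | hmem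
  · have h1 : b.1 ≤ r := (Prod.le_def.mp hba).1
    have h2 : b.2 ≤ κ.rowLen r := (Prod.le_def.mp hba).2
    by_cases hb : b = (r, κ.rowLen r)
    · left; exact hb
    · right
      have hmem' : (b.1, b.2) ∈ κ ↔ b.2 < κ.rowLen b.1 := YoungDiagram.mem_iff_lt_rowLen
      rw [YoungDiagram.mem_cells, ← Prod.mk.eta (p := b), hmem']
      rcases Nat.lt_or_ge b.1 r with hlt | hge
      · have := h b.1 hlt
        omega
      · have hb1 : b.1 = r := le_antisymm h1 hge
        have hb2 : b.2 ≠ κ.rowLen r := by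
          intro hh
          exact hb (Prod.ext hb1 hh)
        rw [hb1]
        omega
  · right
    exact κ.isLowerSet hba hmem

def addCell (κ : YoungDiagram) (r : ℕ) (h : AddableRow κ r) : YoungDiagram :=
  ⟨insert (r, κ.rowLen r) κ.cells, addable_lowerSet h⟩

lemma new_notmem (κ : YoungDiagram) (r : ℕ) : (r, κ.rowLen r) ∉ κ.cells := by
  rw [YoungDiagram.mem_cells, YoungDiagram.mem_iff_lt_rowLen]
  omega

lemma cells_addCell (κ : YoungDiagram) (r : ℕ) (h : AddableRow κ r) :
    (addCell κ r h).cells = insert (r, κ.rowLen r) κ.cells := rfl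

lemma rowLen_eq_of (ν : YoungDiagram) (i t : ℕ) (hmem : ∀ j, (i, j) ∈ ν ↔ j < t) :
    ν.rowLen i = t := by
  have a1 : ¬ ν.rowLen i < t := by
    intro hh
    have := YoungDiagram.mem_iff_lt_rowLen.mp ((hmem (ν.rowLen i)).mpr hh)
    omega
  have a2 : ¬ t < ν.rowLen i := by
    intro hh
    have := (hmem t).mp (YoungDiagram.mem_iff_lt_rowLen.mpr hh)
    omega
  omega

lemma rowLen_addCell (κ : YoungDiagram) (r : ℕ) (h : AddableRow κ r) (i : ℕ) :
    (addCell κ r h).rowLen i = κ.rowLen i + if i = r then 1 else 0 := by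
  apply rowLen_eq_of
  intro j
  rw [← YoungDiagram.mem_cells, cells_addCell, Finset.mem_insert, YoungDiagram.mem_cells,
    YoungDiagram.mem_iff_lt_rowLen, Prod.mk.injEq]
  by_cases hi : i = r
  · subst hi
    simp only [eq_self_iff_true, true_and, if_true]
    omega
  · simp only [hi, if_false, false_and, false_or, add_zero]

lemma addable_le_colLen (κ : YoungDiagram) (r : ℕ) (h : AddableRow κ r) : r ≤ κ.colLen 0 := by
  by_cases hr0 : r = 0
  · omega
  · have h1 := h (r-1) (by omega)
    have h2 : (r-1, 0) ∈ κ := YoungDiagram.mem_iff_lt_rowLen.mpr (by omega)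
    have := YoungDiagram.mem_iff_lt_colLen.mp h2
    omega

lemma colLen_addCell_le (κ : YoungDiagram) (r : ℕ) (h : AddableRow κ r) :
    (addCell κ r h).colLen 0 ≤ κ.colLen 0 + 1 := by
  have hnot : ((κ.colLen 0 + 1, 0) : ℕ × ℕ) ∉ (addCell κ r h).cells := by
    rw [cells_addCell, Finset.mem_insert]
    rintro (heq | hmem)
    · have hle := addable_le_colLen κ r h
      have : κ.colLen 0 + 1 = r := congrArg Prod.fst heq
      omega
    · rw [YoungDiagram.mem_cells, YoungDiagram.mem_iff_lt_colLen] at hmem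
      omega
  by_contra hlt
  push_neg at hlt
  exact hnot (by
    rw [YoungDiagram.mem_cells, YoungDiagram.mem_iff_lt_colLen]
    omega)

lemma sum_cells_col {β : Type*} [AddCommMonoid β] (κ : YoungDiagram) (N : ℕ)
    (hN : κ.rowLen 0 ≤ N) (f : ℕ × ℕ → β) :
    ∑ c ∈ κ.cells, f c = ∑ j ∈ range (N+1), ∑ i ∈ range (κ.colLen j), f (i, j) := by
  have hsig : ∑ σ ∈ (range (N+1)).sigma (fun j => range (κ.colLen j)), f (σ.2, σ.1)
      = ∑ j ∈ range (N+1), ∑ i ∈ range (κ.colLen j), f (i, j) :=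
    Finset.sum_sigma _ _ _
  rw [← hsig]
  apply Finset.sum_nbij' (fun c => (⟨c.2, c.1⟩ : (_ : ℕ) × ℕ)) (fun σ => (σ.2, σ.1))
  · intro c hc
    rw [YoungDiagram.mem_cells] at hc
    rw [Finset.mem_sigma, mem_range, mem_range]
    dsimp only
    constructor
    · have h0 : (0, c.2) ∈ κ := κ.up_left_mem (Nat.zero_le _) le_rfl (by rwa [Prod.mk.eta])
      rw [YoungDiagram.mem_iff_lt_rowLen] at h0
      omega
    · rw [← YoungDiagram.mem_iff_lt_colLen]
      rwa [Prod.mk.eta]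
  · intro σ hσ
    rw [Finset.mem_sigma, mem_range, mem_range] at hσ
    rw [YoungDiagram.mem_cells, YoungDiagram.mem_iff_lt_colLen]
    exact hσ.2
  · intro c _; rfl
  · intro σ _; rfl
  · intro c _; rfl

lemma nstat_eq (κ : YoungDiagram) : nstat κ = ∑ c ∈ κ.cells, (c.1 : ℤ) := by
  rw [nstat, sum_cells_col κ (κ.rowLen 0) le_rfl (fun c => (leg κ c : ℤ)),
      sum_cells_col κ (κ.rowLen 0) le_rfl (fun c => (c.1 : ℤ))]
  apply Finset.sum_congr rfl
  intro j hj
  have hcongr : ∀ i ∈ range (κ.colLen j), (leg κ (i, j) : ℤ) = ((κ.colLen j - 1 - i : ℕ) : ℤ) := by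
    intro i hi
    have h' : leg κ (i, j) = κ.colLen j - 1 - i := by
      rw [leg]
      dsimp only
      omega
    rw [h']
  rw [Finset.sum_congr rfl hcongr, Finset.sum_range_reflect (fun i => (i : ℤ)) _]

lemma nstat_addCell (κ : YoungDiagram) (r : ℕ) (h : AddableRow κ r) :
    nstat (addCell κ r h) = nstat κ + r := by
  rw [nstat_eq, nstat_eq, cells_addCell, Finset.sum_insert (new_notmem κ r)]
  ring

end

noncomputable section

lemma covers_iff (l ν : YoungDiagram) :
    Covers l ν ↔ ∃ r, ∃ h : AddableRow l r, ν = addCell l r h := by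
  constructor
  · rintro ⟨hsub, hcard⟩
    have hcard' : (ν.cells \ l.cells).card = 1 := by
      rw [Finset.card_sdiff_of_subset hsub]; omega
    obtain ⟨c, hc⟩ := Finset.card_eq_one.mp hcard'
    have hcν : c ∈ ν.cells ∧ c ∉ l.cells := by
      have h0 : c ∈ ν.cells \ l.cells := hc ▸ Finset.mem_singleton_self c
      exact ⟨(Finset.mem_sdiff.mp h0).1, (Finset.mem_sdiff.mp h0).2⟩
    have hother : ∀ d ∈ ν.cells, d ≠ c → d ∈ l.cells := by
      intro d hd hdc
      by_contra hdl
      have h0 : d ∈ ν.cells \ l.cells := Finset.mem_sdiff.mpr ⟨hd, hdl⟩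
      rw [hc, Finset.mem_singleton] at h0
      exact hdc h0
    obtain ⟨r, j⟩ := c
    have hj1 : l.rowLen r ≤ j := by
      by_contra hh
      push_neg at hh
      exact hcν.2 (by rw [YoungDiagram.mem_cells, YoungDiagram.mem_iff_lt_rowLen]; exact hh)
    have hj2 : j ≤ l.rowLen r := by
      by_contra hh
      push_neg at hh
      have hmem : (r, l.rowLen r) ∈ ν :=
        ν.up_left_mem le_rfl (le_of_lt hh) ((YoungDiagram.mem_cells _).mp hcν.1)
      have hl : (r, l.rowLen r) ∈ l.cells := by
        apply hother _ ((YoungDiagram.mem_cells _).mpr hmem)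
        intro he
        have h2 := congrArg Prod.snd he
        simp only at h2
        omega
      rw [YoungDiagram.mem_cells, YoungDiagram.mem_iff_lt_rowLen] at hl
      omega
    have hj : j = l.rowLen r := le_antisymm hj2 hj1
    subst hj
    have hadd : AddableRow l r := by
      intro i hi
      have hmem : (i, l.rowLen r) ∈ ν :=
        ν.up_left_mem (le_of_lt hi) le_rfl ((YoungDiagram.mem_cells _).mp hcν.1)
      have hl : (i, l.rowLen r) ∈ l.cells := by
        apply hother _ ((YoungDiagram.mem_cells _).mpr hmem)
        intro he
        have h2 := congrArg Prod.fst he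
        simp only at h2
        omega
      rw [YoungDiagram.mem_cells, YoungDiagram.mem_iff_lt_rowLen] at hl
      exact hl
    refine ⟨r, hadd, ?_⟩
    have hcells : ν.cells = insert (r, l.rowLen r) l.cells := by
      apply Finset.Subset.antisymm
      · intro d hd
        rw [Finset.mem_insert]
        by_cases hdc : d = (r, l.rowLen r)
        · left; exact hdc
        · right; exact hother d hd hdc
      · intro d hd
        rw [Finset.mem_insert] at hd
        rcases hd with rfl | hd
        · exact hcν.1
        · exact hsub hd
    exact YoungDiagram.ext (by rw [hcells, cells_addCell])
  · rintro ⟨r, h, rfl⟩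
    constructor
    · rw [cells_addCell]; exact Finset.subset_insert _ _
    · rw [cells_addCell, Finset.card_insert_of_notMem (new_notmem l r)]

lemma addCell_inj (l : YoungDiagram) {r r' : ℕ} (h : AddableRow l r) (h' : AddableRow l r')
    (he : addCell l r h = addCell l r' h') : r = r' := by
  have h1 : (r, l.rowLen r) ∈ (addCell l r h).cells := by
    rw [cells_addCell]; exact Finset.mem_insert_self _ _
  rw [he, cells_addCell, Finset.mem_insert] at h1
  rcases h1 with heq | hmem
  · exact congrArg Prod.fst heq
  · exact absurd hmem (new_notmem l r)

end

noncomputable section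
end
end YoungAux

set_option maxHeartbeats 2000000 in
/-- For every partition `λ`:
`∑_{ν ∈ U(λ)} q^{n(ν)} / H_ν(q) = (1/(1−q)) q^{n(λ)} / H_λ(q)` in `ℚ(q)`. -/
theorem principal_specialization_pieri (l : YoungDiagram) :
    ∑ᶠ ν ∈ {ν : YoungDiagram | Covers l ν}, RatFunc.X ^ (nstat ν) / Hq ν
      = (1 / (1 - RatFunc.X)) * RatFunc.X ^ (nstat l) / Hq l := by
  classical
  set M := l.colLen 0 + 1 with hMdef
  have hMl : l.colLen 0 ≤ M := by omega
  set L : ℕ → ℕ := fun i => LL l M i with hLdef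
  have hLanti : ∀ i j : ℕ, i < j → j ≤ M → L j < L i := fun i j h1 h2 =>
    LL_strict_anti l M h1 h2
  have hLM : L M = 0 := by
    simp only [hLdef, LL]
    rw [rowLen_eq_zero_iff.mpr hMl]
    omega
  have hLne : ∀ i j : ℕ, i ≤ M → j ≤ M → i ≠ j → L i ≠ L j := by
    intro i j hi hj hij
    rcases lt_or_gt_of_ne hij with h | h
    · exact (hLanti i j h hj).ne'
    · exact (hLanti j i h hi).ne
  -- the summand of the key identity
  set T : ℕ → FF := fun r => (1 - XX * XX ^ L r)⁻¹ *
      ∏ j ∈ (range (M+1)).erase r, (XX ^ L j - XX * XX ^ L r) / (XX ^ L j - XX ^ L r)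
    with hTdef
  have HK : ∑ r ∈ range (M+1), T r = (1 - XX)⁻¹ := by
    apply key_identity M (fun i => XX ^ L i) XX
    · intro i hi j hj hij
      by_contra hne
      exact N2 (L i) (L j) (hLne i j hi hj hne) (sub_eq_zero.mpr hij)
    · intro i _
      exact pow_ne_zero _ RatFunc.X_ne_zero
    · exact RatFunc.X_ne_zero
    · have h1 := N1 1 le_rfl
      rwa [pow_one] at h1
    · intro i _
      rw [← pow_succ']
      exact N1 _ (by omega)
    · rw [hLM, pow_zero]
  -- vanishing of non-addable terms
  have hTzero : ∀ r ∈ range (M+1), ¬ AddableRow l r → T r = 0 := by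
    intro r hr hnadd
    have hr0 : r ≠ 0 := by
      intro h0
      exact hnadd (h0 ▸ fun i hi => absurd hi (Nat.not_lt_zero i))
    have hrM : r ≤ M := by rw [mem_range] at hr; omega
    obtain ⟨i, hi⟩ := not_forall.mp hnadd
    push_neg at hi
    have ha1 : l.rowLen (r-1) ≤ l.rowLen i := l.rowLen_anti i (r-1) (by omega)
    have ha2 : l.rowLen r ≤ l.rowLen (r-1) := l.rowLen_anti (r-1) r (by omega)
    have hLr : L (r-1) = L r + 1 := by
      simp only [hLdef, LL]
      omega
    simp only [hTdef]
    apply mul_eq_zero_of_right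
    apply Finset.prod_eq_zero (i := r - 1)
    · rw [Finset.mem_erase, mem_range]
      exact ⟨by omega, by omega⟩
    · rw [hLr, pow_succ', sub_self, zero_div]
  -- the value of each cover
  have hCov : ∀ r, (h : AddableRow l r) →
      XX ^ (nstat (addCell l r h)) / Hq (addCell l r h)
        = XX ^ (nstat l) / Hq l * T r := by
    intro r h
    have hrM1 : r < M := by
      have := addable_le_colLen l r h
      omega
    have hrM : r ≤ M := le_of_lt hrM1
    have hrmem : r ∈ range (M+1) := mem_range.mpr (by omega)
    have hcolν : (addCell l r h).colLen 0 ≤ M := le_trans (colLen_addCell_le l r h) (by omega)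
    have hLν : ∀ i, LL (addCell l r h) M i = LL l M i + (if i = r then 1 else 0) := by
      intro i
      rw [LL, rowLen_addCell, LL]
      by_cases hir : i = r
      · rw [if_pos hir]
        omega
      · rw [if_neg hir]
        omega
    have hLνne : ∀ i, i ≠ r → LL (addCell l r h) M i = LL l M i := by
      intro i hir
      rw [hLν, if_neg hir, add_zero]
    have hLνr : LL (addCell l r h) M r = LL l M r + 1 := by
      rw [hLν, if_pos rfl]
    have hLanti' : ∀ i j : ℕ, i < j → j ≤ M → LL l M j < LL l M i := fun i j h1 h2 =>
      LL_strict_anti l M h1 h2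
    have hW1l0 : (∏ i ∈ Ioc r M, ((1:FF) - XX ^ (LL l M r - LL l M i))) ≠ 0 := by
      rw [Finset.prod_ne_zero_iff]
      intro i hi
      rw [mem_Ioc] at hi
      have := hLanti' r i hi.1 hi.2
      exact N1 _ (by omega)
    have hW2l0 : (∏ i ∈ range r, ((1:FF) - XX ^ (LL l M i - LL l M r))) ≠ 0 := by
      rw [Finset.prod_ne_zero_iff]
      intro i hi
      rw [mem_range] at hi
      have := hLanti' i r hi hrM
      exact N1 _ (by omega)
    have hc0 : ((1:FF) - XX ^ (LL l M r + 1)) ≠ 0 := N1 _ (by omega)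
    have hGl0 : (∏ i ∈ range (M+1), ∏ j ∈ Ioc i M, ((1:FF) - XX ^ (LL l M i - LL l M j))) ≠ 0 := by
      rw [Finset.prod_ne_zero_iff]
      intro i hi
      rw [Finset.prod_ne_zero_iff]
      intro j hj
      rw [mem_Ioc] at hj
      have := hLanti' i j hj.1 hj.2
      exact N1 _ (by omega)
    have prel : (∏ i ∈ range (M+1), ∏ k ∈ Icc 1 (LL (addCell l r h) M i), ((1:FF) - XX ^ k))
        = (1 - XX ^ (LL l M r + 1)) *
          ∏ i ∈ range (M+1), ∏ k ∈ Icc 1 (LL l M i), ((1:FF) - XX ^ k) := by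
      rw [← Finset.mul_prod_erase _ _ hrmem,
          ← Finset.mul_prod_erase _ (fun i => ∏ k ∈ Icc 1 (LL l M i), ((1:FF) - XX ^ k)) hrmem]
      have h1 : ∏ k ∈ Icc 1 (LL (addCell l r h) M r), ((1:FF) - XX ^ k)
          = (1 - XX ^ (LL l M r + 1)) * ∏ k ∈ Icc 1 (LL l M r), ((1:FF) - XX ^ k) := by
        rw [hLνr]
        have hins : Icc 1 (LL l M r + 1) = insert (LL l M r + 1) (Icc 1 (LL l M r)) := by
          ext k
          rw [Finset.mem_insert, mem_Icc, mem_Icc]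
          omega
        rw [hins, Finset.prod_insert (by rw [mem_Icc]; omega)]
      have h2 : ∏ i ∈ (range (M+1)).erase r, ∏ k ∈ Icc 1 (LL (addCell l r h) M i), ((1:FF) - XX ^ k)
          = ∏ i ∈ (range (M+1)).erase r, ∏ k ∈ Icc 1 (LL l M i), ((1:FF) - XX ^ k) := by
        apply Finset.prod_congr rfl
        intro i hi
        rw [mem_erase] at hi
        rw [hLνne i hi.1]
      rw [h1, h2]
      ring
    have grel : (∏ i ∈ range (M+1), ∏ j ∈ Ioc i M,
            ((1:FF) - XX ^ (LL (addCell l r h) M i - LL (addCell l r h) M j)))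
          * ((∏ i ∈ Ioc r M, ((1:FF) - XX ^ (LL l M r - LL l M i)))
            * (∏ i ∈ range r, ((1:FF) - XX ^ (LL l M i - LL l M r))))
        = (∏ i ∈ range (M+1), ∏ j ∈ Ioc i M, ((1:FF) - XX ^ (LL l M i - LL l M j)))
          * ((∏ i ∈ Ioc r M, ((1:FF) - XX ^ (LL l M r + 1 - LL l M i)))
            * (∏ i ∈ range r, ((1:FF) - XX ^ (LL l M i - LL l M r - 1)))) := by
      rw [← Finset.mul_prod_erase _ _ hrmem,
          ← Finset.mul_prod_erase _
            (fun i => ∏ j ∈ Ioc i M, ((1:FF) - XX ^ (LL l M i - LL l M j))) hrmem]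
      have hrown : ∏ j ∈ Ioc r M,
            ((1:FF) - XX ^ (LL (addCell l r h) M r - LL (addCell l r h) M j))
          = ∏ i ∈ Ioc r M, ((1:FF) - XX ^ (LL l M r + 1 - LL l M i)) := by
        apply Finset.prod_congr rfl
        intro j hj
        rw [mem_Ioc] at hj
        rw [hLνr, hLνne j (by omega)]
      have hW2l' : (∏ i ∈ (range (M+1)).erase r,
            (if i < r then (1:FF) - XX ^ (LL l M i - LL l M r) else 1))
          = ∏ i ∈ range r, ((1:FF) - XX ^ (LL l M i - LL l M r)) := by
        rw [← Finset.prod_filter]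
        apply Finset.prod_congr ?_ (fun _ _ => rfl)
        ext i
        rw [mem_filter, mem_erase, mem_range, mem_range]
        omega
      have hW2n' : (∏ i ∈ (range (M+1)).erase r,
            (if i < r then (1:FF) - XX ^ (LL l M i - LL l M r - 1) else 1))
          = ∏ i ∈ range r, ((1:FF) - XX ^ (LL l M i - LL l M r - 1)) := by
        rw [← Finset.prod_filter]
        apply Finset.prod_congr ?_ (fun _ _ => rfl)
        ext i
        rw [mem_filter, mem_erase, mem_range, mem_range]
        omega
      have herase : (∏ i ∈ (range (M+1)).erase r, ∏ j ∈ Ioc i M,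
              ((1:FF) - XX ^ (LL (addCell l r h) M i - LL (addCell l r h) M j)))
            * (∏ i ∈ range r, ((1:FF) - XX ^ (LL l M i - LL l M r)))
          = (∏ i ∈ (range (M+1)).erase r, ∏ j ∈ Ioc i M, ((1:FF) - XX ^ (LL l M i - LL l M j)))
            * (∏ i ∈ range r, ((1:FF) - XX ^ (LL l M i - LL l M r - 1))) := by
        rw [← hW2l', ← hW2n', ← Finset.prod_mul_distrib, ← Finset.prod_mul_distrib]
        apply Finset.prod_congr rfl
        intro i hi
        rw [mem_erase, mem_range] at hi
        by_cases hir : i < r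
        · rw [if_pos hir, if_pos hir]
          have hrIoc : r ∈ Ioc i M := mem_Ioc.mpr ⟨hir, hrM⟩
          rw [← Finset.mul_prod_erase _ _ hrIoc,
              ← Finset.mul_prod_erase _ (fun j => (1:FF) - XX ^ (LL l M i - LL l M j)) hrIoc]
          have hinner : ∏ j ∈ (Ioc i M).erase r,
                ((1:FF) - XX ^ (LL (addCell l r h) M i - LL (addCell l r h) M j))
              = ∏ j ∈ (Ioc i M).erase r, ((1:FF) - XX ^ (LL l M i - LL l M j)) := by
            apply Finset.prod_congr rfl
            intro j hj
            rw [mem_erase] at hj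
            rw [hLνne i (by omega), hLνne j hj.1]
          rw [hinner, hLνne i (by omega), hLνr]
          have hexp : LL l M i - (LL l M r + 1) = LL l M i - LL l M r - 1 := by omega
          rw [hexp]
          ring
        · rw [if_neg hir, if_neg hir, mul_one, mul_one]
          apply Finset.prod_congr rfl
          intro j hj
          rw [mem_Ioc] at hj
          rw [hLνne i hi.1, hLνne j (by omega)]
      rw [hrown]
      linear_combination ((∏ i ∈ Ioc r M, ((1:FF) - XX ^ (LL l M r + 1 - LL l M i)))
        * (∏ i ∈ Ioc r M, ((1:FF) - XX ^ (LL l M r - LL l M i)))) * herase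
    have C1 : Hq (addCell l r h) * ((∏ i ∈ Ioc r M, ((1:FF) - XX ^ (LL l M r + 1 - LL l M i)))
          * (∏ i ∈ range r, ((1:FF) - XX ^ (LL l M i - LL l M r - 1))))
        = Hq l * ((1 - XX ^ (LL l M r + 1))
          * ((∏ i ∈ Ioc r M, ((1:FF) - XX ^ (LL l M r - LL l M i)))
            * (∏ i ∈ range r, ((1:FF) - XX ^ (LL l M i - LL l M r))))) := by
      have hAl := claimA l M hMl
      have hAν := claimA (addCell l r h) M hcolν
      apply mul_left_cancel₀ hGl0
      linear_combination (-(Hq (addCell l r h))) * grel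
        + ((∏ i ∈ Ioc r M, ((1:FF) - XX ^ (LL l M r - LL l M i)))
            * (∏ i ∈ range r, ((1:FF) - XX ^ (LL l M i - LL l M r)))) * hAν
        + ((∏ i ∈ Ioc r M, ((1:FF) - XX ^ (LL l M r - LL l M i)))
            * (∏ i ∈ range r, ((1:FF) - XX ^ (LL l M i - LL l M r)))) * prel
        - ((1 - XX ^ (LL l M r + 1))
            * ((∏ i ∈ Ioc r M, ((1:FF) - XX ^ (LL l M r - LL l M i)))
              * (∏ i ∈ range r, ((1:FF) - XX ^ (LL l M i - LL l M r))))) * hAl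
    have hTr : T r = ((∏ i ∈ Ioc r M, ((1:FF) - XX ^ (LL l M r + 1 - LL l M i)))
          * (XX ^ r * (∏ i ∈ range r, ((1:FF) - XX ^ (LL l M i - LL l M r - 1)))))
        / ((1 - XX ^ (LL l M r + 1))
          * ((∏ i ∈ Ioc r M, ((1:FF) - XX ^ (LL l M r - LL l M i)))
            * (∏ i ∈ range r, ((1:FF) - XX ^ (LL l M i - LL l M r))))) := by
      simp only [hTdef, hLdef]
      have hsplit : (range (M+1)).erase r = range r ∪ Ioc r M := by
        ext i
        rw [mem_union, mem_erase, mem_range, mem_range, mem_Ioc]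
        omega
      have hdisj2 : Disjoint (range r) (Ioc r M) := by
        rw [Finset.disjoint_left]
        intro i hi1 hi2
        rw [mem_range] at hi1
        rw [mem_Ioc] at hi2
        omega
      rw [hsplit, Finset.prod_union hdisj2]
      have hIoc : ∏ j ∈ Ioc r M,
            ((XX:FF) ^ LL l M j - XX * XX ^ LL l M r) / (XX ^ LL l M j - XX ^ LL l M r)
          = ∏ j ∈ Ioc r M,
            ((1:FF) - XX ^ (LL l M r + 1 - LL l M j)) / (1 - XX ^ (LL l M r - LL l M j)) := by
        apply Finset.prod_congr rfl
        intro j hj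
        rw [mem_Ioc] at hj
        have hlt := hLanti' r j hj.1 hj.2
        have hde : ((XX:FF) ^ LL l M j - XX ^ LL l M r) ≠ 0 :=
          N2 _ _ (by omega)
        rw [div_eq_div_iff hde (N1 _ (by omega))]
        have e1 : (XX:FF) ^ (LL l M r) = XX ^ (LL l M r - LL l M j) * XX ^ (LL l M j) := by
          rw [← pow_add]
          congr 1
          omega
        have e2 : (XX:FF) ^ (LL l M r) * XX
            = XX ^ (LL l M r + 1 - LL l M j) * XX ^ (LL l M j) := by
          rw [← pow_add, ← pow_succ]
          congr 1
          omega
        linear_combination (1 - (XX:FF) ^ (LL l M r + 1 - LL l M j)) * e1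
          + ((XX:FF) ^ (LL l M r - LL l M j) - 1) * e2
      have hrange : ∏ j ∈ range r,
            ((XX:FF) ^ LL l M j - XX * XX ^ LL l M r) / (XX ^ LL l M j - XX ^ LL l M r)
          = ∏ j ∈ range r,
            (XX * (((1:FF) - XX ^ (LL l M j - LL l M r - 1)) / (1 - XX ^ (LL l M j - LL l M r)))) := by
        apply Finset.prod_congr rfl
        intro j hj
        rw [mem_range] at hj
        have hlt := hLanti' j r hj hrM
        have hde : ((XX:FF) ^ LL l M j - XX ^ LL l M r) ≠ 0 :=
          N2 _ _ (by omega)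
        rw [mul_div_assoc', div_eq_div_iff hde (N1 _ (by omega))]
        have e1 : (XX:FF) ^ (LL l M j - LL l M r)
            = XX ^ (LL l M j - LL l M r - 1) * XX := by
          rw [← pow_succ]
          congr 1
          omega
        have e2 : (XX:FF) ^ (LL l M j)
            = XX ^ (LL l M j - LL l M r - 1) * XX * XX ^ (LL l M r) := by
          rw [← pow_succ, ← pow_add]
          congr 1
          omega
        linear_combination ((1 - (XX:FF) ^ (LL l M j - LL l M r - 1)) * XX * XX ^ (LL l M r)) * e1
          + (1 - (XX:FF) ^ (LL l M j - LL l M r) - XX + XX * XX ^ (LL l M j - LL l M r - 1)) * e2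
      rw [hIoc, hrange, Finset.prod_mul_distrib, Finset.prod_const, card_range,
        Finset.prod_div_distrib, Finset.prod_div_distrib, ← pow_succ']
      field_simp
    have hn : nstat (addCell l r h) = nstat l + r := nstat_addCell l r h
    rw [hn, zpow_add₀ RatFunc.X_ne_zero, zpow_natCast, hTr, div_mul_div_comm,
      div_eq_div_iff (Hq_ne_zero _)
        (mul_ne_zero (Hq_ne_zero l) (mul_ne_zero hc0 (mul_ne_zero hW1l0 hW2l0)))]
    linear_combination (-(XX ^ (nstat l) * XX ^ (r:ℕ))) * C1
  -- the set of covers as a finset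
  have haddM : ∀ r, AddableRow l r → r ∈ range (M+1) := by
    intro r h
    have := addable_le_colLen l r h
    rw [mem_range]
    omega
  set Cov : Finset YoungDiagram :=
    ((range (M+1)).filter (fun r => AddableRow l r)).image
      (fun r => if h : AddableRow l r then addCell l r h else l) with hCovdef
  have hset : {ν : YoungDiagram | Covers l ν} = ↑Cov := by
    ext ν
    rw [Set.mem_setOf_eq, covers_iff, hCovdef, Finset.coe_image, Set.mem_image]
    constructor
    · rintro ⟨r, h, rfl⟩
      refine ⟨r, ?_, by rw [dif_pos h]⟩
      rw [Finset.coe_filter]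
      exact ⟨(mem_range.mp (haddM r h) : r < M + 1) |> fun hh => (mem_range.mpr hh), h⟩
    · rintro ⟨r, hr, rfl⟩
      rw [Finset.coe_filter, Set.mem_setOf_eq] at hr
      exact ⟨r, hr.2, by rw [dif_pos hr.2]⟩
  rw [hset, finsum_mem_coe_finset, hCovdef]
  rw [Finset.sum_image (by
    intro r hr r' hr' he
    rw [Finset.mem_coe, mem_filter] at hr hr'
    simp only at he
    rw [dif_pos hr.2, dif_pos hr'.2] at he
    exact addCell_inj l hr.2 hr'.2 he)]
  have hstep : ∀ r ∈ (range (M+1)).filter (fun r => AddableRow l r),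
      XX ^ (nstat (if h : AddableRow l r then addCell l r h else l))
        / Hq (if h : AddableRow l r then addCell l r h else l)
      = XX ^ (nstat l) / Hq l * T r := by
    intro r hr
    rw [mem_filter] at hr
    rw [dif_pos hr.2]
    exact hCov r hr.2
  rw [Finset.sum_congr rfl hstep]
  rw [Finset.sum_filter_of_ne (by
    intro r hr hne
    by_contra hnadd
    rw [hTzero r hr hnadd, mul_zero] at hne
    exact hne rfl)]
  rw [← Finset.mul_sum, HK]
  rw [one_div, div_eq_mul_inv, div_eq_mul_inv]
  ring

end
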